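/- Let F ⊆ 2^{[n]} be a hereditary family with δ(F) ≥ 2^{d−1} − c + 1 where 1 ≤ c ≤ d, let P = [d] be an isolated pile, G = F|_{[d]}, and suppose |G| = 2^d − t. If [d] contains at least one bad vertex (which it does since P is a pile), then t ≤ 2c − 2; consequently every x ∈ [d] satisfies d_G(x) ≥ 2^{d−1} − 2c + 2. -/

import Mathlib

open Finset

/-- The degree of `x` in `F`. -/
def deg (F : Finset (Finset ℕ)) (x : ℕ) : ℕ :=
  (F.filter (fun A => x ∈ A)).card

/-- The neighborhood `N(x) = ⋃_{x ∈ A ∈ F} A`. -/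
def nbhd (F : Finset (Finset ℕ)) (x : ℕ) : Finset ℕ :=
  (F.filter (fun A => x ∈ A)).biUnion id

/-- `P` is a pile of `F` (of size `d`). -/
def IsPile (F : Finset (Finset ℕ)) (d : ℕ) (P : Finset ℕ) : Prop :=
  P.card = d ∧ (∀ y ∈ P, P ⊆ nbhd F y) ∧ ∃ z ∈ P, nbhd F z = P

/-- for an isolated pile `P = [d]` with `|G| = 2^d - t`
(where `G = F|_{[d]}`), one has `t ≤ 2c - 2` and every `x ∈ [d]` satisfies
`d_G(x) ≥ 2^{d-1} - 2c + 2`. -/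
theorem stmt_16 (n d c t : ℕ) (hc1 : 1 ≤ c) (hcd : c ≤ d)
    (F : Finset (Finset ℕ)) (hF : F ⊆ (Finset.Icc 1 n).powerset)
    (hered : ∀ A ∈ F, ∀ B ⊆ A, B ∈ F)
    (hdelta : ∀ x ∈ Finset.Icc 1 n, (2 ^ (d - 1) - c + 1 : ℤ) ≤ (deg F x : ℤ))
    (hP : IsPile F d (Finset.Icc 1 d))
    (hiso : ∀ P', IsPile F d P' → P' ≠ Finset.Icc 1 d → Disjoint P' (Finset.Icc 1 d))
    (ht : t ≤ 2 ^ d)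
    (hG : ((F.filter (fun S => S ⊆ Finset.Icc 1 d)).card : ℤ) = 2 ^ d - t) :
    (t : ℤ) ≤ 2 * c - 2
    ∧ ∀ x ∈ Finset.Icc 1 d,
        (2 ^ (d - 1) - 2 * c + 2 : ℤ)
          ≤ ((F.filter (fun S => S ⊆ Finset.Icc 1 d ∧ x ∈ S)).card : ℤ) := by
  classical
  have hd1 : 1 ≤ d := hc1.trans hcd
  obtain ⟨hcard, hsub, z, hzP, hz⟩ := hP
  set G := F.filter (fun S => S ⊆ Finset.Icc 1 d) with hGdef
  -- z ∈ nbhd F z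
  have hznb : z ∈ nbhd F z := hsub z hzP (hz ▸ hzP)
  obtain ⟨A, hA, hzA⟩ : ∃ A ∈ F.filter (fun A => z ∈ A), z ∈ A := by
    simpa [nbhd] using hznb
  have hAF : A ∈ F := (Finset.mem_filter.mp hA).1
  have hzn : z ∈ Finset.Icc 1 n :=
    Finset.mem_powerset.mp (hF hAF) hzA
  -- any member containing z is in the pile
  have hAz : ∀ A ∈ F, z ∈ A → A ⊆ Finset.Icc 1 d := by
    intro B hBF hzB
    rw [← hz]
    intro a ha
    exact Finset.mem_biUnion.mpr ⟨B, Finset.mem_filter.mpr ⟨hBF, hzB⟩, ha⟩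
  -- deg F z = d_G z
  have hdegz : (F.filter (fun A => z ∈ A)).card
      = (G.filter (fun S => z ∈ S)).card := by
    congr 1
    rw [hGdef, Finset.filter_filter]
    apply Finset.filter_congr
    intro S hS
    constructor
    · intro h; exact ⟨hAz S hS h, h⟩
    · intro h; exact h.2
  -- hereditary counting: sets avoiding x are at least as many as sets containing x
  have key : ∀ x, (G.filter (fun S => x ∈ S)).card
      ≤ (G.filter (fun S => x ∉ S)).card := by
    intro x
    apply Finset.card_le_card_of_injOn (fun S => S.erase x)
    · intro S hS
      rw [Finset.mem_coe, Finset.mem_filter] at hS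
      rw [Finset.mem_coe, Finset.mem_filter]
      obtain ⟨hSG, hxS⟩ := hS
      rw [hGdef, Finset.mem_filter] at hSG ⊢
      exact ⟨⟨hered S hSG.1 _ (Finset.erase_subset x S),
        (Finset.erase_subset x S).trans hSG.2⟩, Finset.notMem_erase x S⟩
    · intro S hS T hT hST
      rw [Finset.mem_coe, Finset.mem_filter] at hS hT
      have : insert x (S.erase x) = insert x (T.erase x) := congrArg (insert x) hST
      rwa [Finset.insert_erase hS.2, Finset.insert_erase hT.2] at this
  -- split |G|
  have hsplit : ∀ x, (G.filter (fun S => x ∈ S)).card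
      + (G.filter (fun S => x ∉ S)).card = G.card := by
    intro x
    exact Finset.card_filter_add_card_filter_not (fun S => x ∈ S)
  have h2d : (2 : ℤ) ^ d = 2 * 2 ^ (d - 1) := by
    conv_lhs => rw [show d = (d - 1) + 1 by omega]
    ring
  have hdz := hdelta z hzn
  rw [deg, hdegz] at hdz
  -- first part
  have ht1 : (t : ℤ) ≤ 2 * c - 2 := by
    have h1 := key z
    have h2 := hsplit z
    have : 2 * ((G.filter (fun S => z ∈ S)).card : ℤ) ≤ (G.card : ℤ) := by
      push_cast [← h2]
      linarith [Int.ofNat_le.mpr h1]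
    rw [hGdef] at this
    rw [hG] at this
    linarith
  refine ⟨ht1, fun x hx => ?_⟩
  -- sets avoiding x are at most 2^(d-1)
  have hxd : x ∈ Finset.Icc 1 d := hx
  have havoid : (G.filter (fun S => x ∉ S)).card ≤ 2 ^ (d - 1) := by
    have hs : G.filter (fun S => x ∉ S) ⊆ ((Finset.Icc 1 d).erase x).powerset := by
      intro S hS
      rw [Finset.mem_filter] at hS
      obtain ⟨hSG, hxS⟩ := hS
      rw [hGdef, Finset.mem_filter] at hSG
      rw [Finset.mem_powerset]
      intro a ha
      exact Finset.mem_erase.mpr ⟨fun h => hxS (h ▸ ha), hSG.2 ha⟩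
    calc (G.filter (fun S => x ∉ S)).card
        ≤ ((Finset.Icc 1 d).erase x).powerset.card := Finset.card_le_card hs
      _ = 2 ^ (d - 1) := by
          rw [Finset.card_powerset, Finset.card_erase_of_mem hxd,
            Nat.card_Icc]
          congr 1
  have h2 := hsplit x
  have heq : (F.filter (fun S => S ⊆ Finset.Icc 1 d ∧ x ∈ S)).card
      = (G.filter (fun S => x ∈ S)).card := by
    rw [hGdef, Finset.filter_filter]
  rw [heq]
  have : ((G.filter (fun S => x ∈ S)).card : ℤ)
      = (G.card : ℤ) - ((G.filter (fun S => x ∉ S)).card : ℤ) := by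
    push_cast [← h2]; ring
  rw [this, hGdef, hG]
  have : ((G.filter (fun S => x ∉ S)).card : ℤ) ≤ 2 ^ (d - 1) := by
    exact_mod_cast Int.ofNat_le.mpr havoid
  linarith
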